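/- Let S₃ = ω₃ ∩ ℤ⁴. Then the Hilbert basis of S₃ is {f₁, f₂, f₃, f₄, f₅, f₆, f₇, f₈, f₉}, where f₆=(0,2,2,1), f₇=(1,1,1,0), f₈=(1,2,2,0), f₉=(0,1,1,1); that is, every element of S₃ is an ℕ-linear combination of f₁, …, f₉, and no fᵢ (1 ≤ i ≤ 9) can be written as a sum of two nonzero elements of S₃. -/

import Mathlib

/-- The nine lattice points `f₁, …, f₉` (0-indexed as `f 0, …, f 8`). -/
def f : Fin 9 → (Fin 4 → ℤ) :=
  ![![1,0,0,0], ![0,1,0,0], ![1,2,3,0], ![0,0,0,1], ![0,3,3,1],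
    ![0,2,2,1], ![1,1,1,0], ![1,2,2,0], ![0,1,1,1]]

/-- Coercion of an integer vector to a real vector. -/
def toR (v : Fin 4 → ℤ) : Fin 4 → ℝ := fun j => (v j : ℝ)

/-- The convex cone generated by a finite family of vectors in `ℝ⁴`. -/
def cone {n : ℕ} (v : Fin n → (Fin 4 → ℝ)) : Set (Fin 4 → ℝ) :=
  {x | ∃ lam : Fin n → ℝ, (∀ i, 0 ≤ lam i) ∧ x = ∑ i, lam i • v i}

/-- The cone `ω₃` generated by `f₁, …, f₅`. -/
def ω₃ : Set (Fin 4 → ℝ) := cone (fun i : Fin 5 => toR (f (Fin.castLE (by norm_num) i)))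

set_option maxHeartbeats 1000000

/-- The semigroup `S₃ = ω₃ ∩ ℤ⁴`. -/
def S₃ : Set (Fin 4 → ℤ) := {v | toR v ∈ ω₃}

/-- The Hilbert basis of `S₃ = ω₃ ∩ ℤ⁴` is `{f₁, …, f₉}`, where
`f₆=(0,2,2,1)`, `f₇=(1,1,1,0)`, `f₈=(1,2,2,0)`, `f₉=(0,1,1,1)`. -/
def Sineq (v : Fin 4 → ℤ) : Prop :=
  0 ≤ v 3 ∧ 0 ≤ v 2 ∧ 0 ≤ v 0 + v 1 - v 2 ∧ 0 ≤ 3*v 0 - v 2 + 3*v 3 ∧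
  0 ≤ 3*v 1 - 2*v 2 ∧ 0 ≤ v 0

lemma castLE_eval (h : 5 ≤ 9) (i : Fin 5) :
    f (Fin.castLE h i) = ![![1,0,0,0], ![0,1,0,0], ![1,2,3,0], ![0,0,0,1], ![0,3,3,1]] i := by
  fin_cases i <;> rfl

lemma lemA {v : Fin 4 → ℤ} (hv : v ∈ S₃) : Sineq v := by
  obtain ⟨lam, hpos, hsum⟩ := hv
  simp only [castLE_eval] at hsum
  have h0 := congrFun hsum 0
  have h1 := congrFun hsum 1
  have h2 := congrFun hsum 2
  have h3 := congrFun hsum 3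
  simp [toR, Fin.sum_univ_five, Matrix.vecHead, Matrix.vecTail] at h0 h1 h2 h3
  have p0 := hpos 0; have p1 := hpos 1; have p2 := hpos 2
  have p3 := hpos 3; have p4 := hpos 4
  refine ⟨?_, ?_, ?_, ?_, ?_, ?_⟩ <;>
    [ (have : (0:ℝ) ≤ (v 3 : ℝ) := by rw [h3]; linarith);
      (have : (0:ℝ) ≤ (v 2 : ℝ) := by rw [h2]; linarith);
      (have : (0:ℝ) ≤ (v 0 + v 1 - v 2 : ℤ) := by push_cast; rw [h0, h1, h2]; ring_nf; linarith);
      (have : (0:ℝ) ≤ (3*v 0 - v 2 + 3*v 3 : ℤ) := by push_cast; rw [h0, h2, h3]; ring_nf; linarith);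
      (have : (0:ℝ) ≤ (3*v 1 - 2*v 2 : ℤ) := by push_cast; rw [h1, h2]; ring_nf; linarith);
      (have : (0:ℝ) ≤ (v 0 : ℝ) := by rw [h0]; linarith)] <;>
    exact_mod_cast this

lemma lemB (i : Fin 9) : f i ∈ S₃ := by
  have key : ∀ lam : Fin 5 → ℝ, (∀ i, 0 ≤ lam i) →
      ∀ w : Fin 4 → ℤ, (toR w = ∑ i, lam i • toR (f (Fin.castLE (by norm_num) i))) → w ∈ S₃ :=
    fun lam h w hw => ⟨lam, h, hw⟩
  fin_cases i
  · exact key ![1,0,0,0,0] (by intro i; fin_cases i <;> norm_num) _ (by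
      funext j; simp only [castLE_eval]
      fin_cases j <;> norm_num [toR, f, Fin.sum_univ_five, Matrix.cons_val_two, Matrix.cons_val_three, Matrix.cons_val_four, Matrix.vecHead, Matrix.vecTail])
  · exact key ![0,1,0,0,0] (by intro i; fin_cases i <;> norm_num) _ (by
      funext j; simp only [castLE_eval]
      fin_cases j <;> norm_num [toR, f, Fin.sum_univ_five, Matrix.cons_val_two, Matrix.cons_val_three, Matrix.cons_val_four, Matrix.vecHead, Matrix.vecTail])
  · exact key ![0,0,1,0,0] (by intro i; fin_cases i <;> norm_num) _ (by
      funext j; simp only [castLE_eval]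
      fin_cases j <;> norm_num [toR, f, Fin.sum_univ_five, Matrix.cons_val_two, Matrix.cons_val_three, Matrix.cons_val_four, Matrix.vecHead, Matrix.vecTail])
  · exact key ![0,0,0,1,0] (by intro i; fin_cases i <;> norm_num) _ (by
      funext j; simp only [castLE_eval]
      fin_cases j <;> norm_num [toR, f, Fin.sum_univ_five, Matrix.cons_val_two, Matrix.cons_val_three, Matrix.cons_val_four, Matrix.vecHead, Matrix.vecTail])
  · exact key ![0,0,0,0,1] (by intro i; fin_cases i <;> norm_num) _ (by
      funext j; simp only [castLE_eval]
      fin_cases j <;> norm_num [toR, f, Fin.sum_univ_five, Matrix.cons_val_two, Matrix.cons_val_three, Matrix.cons_val_four, Matrix.vecHead, Matrix.vecTail])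
  · exact key ![0,0,0,1/3,2/3] (by intro i; fin_cases i <;> norm_num) _ (by
      funext j; simp only [castLE_eval]
      fin_cases j <;> norm_num [toR, f, Fin.sum_univ_five, Matrix.cons_val_two, Matrix.cons_val_three, Matrix.cons_val_four, Matrix.vecHead, Matrix.vecTail])
  · exact key ![2/3,1/3,1/3,0,0] (by intro i; fin_cases i <;> norm_num) _ (by
      funext j; simp only [castLE_eval]
      fin_cases j <;> norm_num [toR, f, Fin.sum_univ_five, Matrix.cons_val_two, Matrix.cons_val_three, Matrix.cons_val_four, Matrix.vecHead, Matrix.vecTail])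
  · exact key ![1/3,2/3,2/3,0,0] (by intro i; fin_cases i <;> norm_num) _ (by
      funext j; simp only [castLE_eval]
      fin_cases j <;> norm_num [toR, f, Fin.sum_univ_five, Matrix.cons_val_two, Matrix.cons_val_three, Matrix.cons_val_four, Matrix.vecHead, Matrix.vecTail])
  · exact key ![0,0,0,2/3,1/3] (by intro i; fin_cases i <;> norm_num) _ (by
      funext j; simp only [castLE_eval]
      fin_cases j <;> norm_num [toR, f, Fin.sum_univ_five, Matrix.cons_val_two, Matrix.cons_val_three, Matrix.cons_val_four, Matrix.vecHead, Matrix.vecTail])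

lemma fe0 : f 0 = ![1,0,0,0] := by decide
lemma fe1 : f 1 = ![0,1,0,0] := by decide
lemma fe2 : f 2 = ![1,2,3,0] := by decide
lemma fe3 : f 3 = ![0,0,0,1] := by decide
lemma fe4 : f 4 = ![0,3,3,1] := by decide
lemma fe5 : f 5 = ![0,2,2,1] := by decide
lemma fe6 : f 6 = ![1,1,1,0] := by decide
lemma fe7 : f 7 = ![1,2,2,0] := by decide
lemma fe8 : f 8 = ![0,1,1,1] := by decide

lemma keystep {v : Fin 4 → ℤ} (hv : Sineq v)
    (hne : ¬(v 0 = 0 ∧ v 1 = 0 ∧ v 2 = 0 ∧ v 3 = 0)) :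
    ∃ i : Fin 9, Sineq (v - f i) := by
  obtain ⟨h1, h2, h3, h4, h5, h6⟩ := hv
  have main : Sineq (v - f 0) ∨ Sineq (v - f 1) ∨ Sineq (v - f 2) ∨ Sineq (v - f 3) ∨
      Sineq (v - f 4) ∨ Sineq (v - f 5) ∨ Sineq (v - f 6) ∨ Sineq (v - f 7) ∨
      Sineq (v - f 8) := by
    simp only [Sineq, Pi.sub_apply, fe0, fe1, fe2, fe3, fe4, fe5, fe6, fe7, fe8]
    norm_num [Matrix.cons_val_one, Matrix.cons_val_two, Matrix.cons_val_three, Matrix.vecHead, Matrix.vecTail]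
    by_cases hd : 1 ≤ v 3
    · by_cases ht3 : 3 ≤ 3 * v 0 - v 2 + 3 * v 3
      · exact Or.inr (Or.inr (Or.inr (Or.inl (by omega))))
      · by_cases ht2 : 2 ≤ 3 * v 0 - v 2 + 3 * v 3
        · by_cases hb1 : 1 ≤ 3 * v 1 - 2 * v 2
          · exact Or.inr (Or.inr (Or.inr (Or.inr (Or.inr (Or.inr (Or.inr (Or.inr ((by omega)))))))))
          · exact Or.inr (Or.inr (Or.inr (Or.inr (Or.inl (by omega)))))
        · by_cases ht1 : 1 ≤ 3 * v 0 - v 2 + 3 * v 3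
          · exact Or.inr (Or.inr (Or.inr (Or.inr (Or.inr (Or.inl (by omega))))))
          · exact Or.inr (Or.inr (Or.inr (Or.inr (Or.inl (by omega)))))
    · by_cases ha : 1 ≤ v 0
      · by_cases hab : 1 ≤ v 0 + v 1 - v 2
        · by_cases hs3 : 3 ≤ 3 * v 0 - v 2
          · exact Or.inl (by omega)
          · by_cases hs2 : 2 ≤ 3 * v 0 - v 2
            · exact Or.inr (Or.inr (Or.inr (Or.inr (Or.inr (Or.inr (Or.inl (by omega)))))))
            · by_cases hs1 : 1 ≤ 3 * v 0 - v 2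
              · exact Or.inr (Or.inr (Or.inr (Or.inr (Or.inr (Or.inr (Or.inr (Or.inl (by omega))))))))
              · exact Or.inr (Or.inr (Or.inl (by omega)))
        · exact Or.inr (Or.inr (Or.inl (by omega)))
      · exact Or.inr (Or.inl (by omega))
  rcases main with h|h|h|h|h|h|h|h|h
  exacts [⟨0, h⟩, ⟨1, h⟩, ⟨2, h⟩, ⟨3, h⟩, ⟨4, h⟩, ⟨5, h⟩, ⟨6, h⟩, ⟨7, h⟩, ⟨8, h⟩]

lemma fsum (i : Fin 9) : 1 ≤ f i 0 + f i 1 + f i 2 + f i 3 := by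
  fin_cases i <;> decide

lemma decomp : ∀ n : ℕ, ∀ v : Fin 4 → ℤ, Sineq v → v 0 + v 1 + v 2 + v 3 ≤ (n : ℤ) →
    ∃ c : Fin 9 → ℕ, v = ∑ i, c i • f i := by
  intro n
  induction n with
  | zero =>
    intro v hv hb
    obtain ⟨h1, h2, h3, h4, h5, h6⟩ := hv
    have hz : v = 0 := by funext j; fin_cases j <;> simp <;> omega
    exact ⟨0, by simp [hz]⟩
  | succ n ih =>
    intro v hv hb
    by_cases h0 : v = 0
    · exact ⟨0, by simp [h0]⟩
    · have hne : ¬(v 0 = 0 ∧ v 1 = 0 ∧ v 2 = 0 ∧ v 3 = 0) := by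
        intro ⟨a0, a1, a2, a3⟩
        exact h0 (funext fun j => by fin_cases j <;> simpa)
      obtain ⟨i, hi⟩ := keystep hv hne
      have hs := fsum i
      obtain ⟨c, hc⟩ := ih (v - f i) hi (by
        simp only [Pi.sub_apply]; push_cast at hb ⊢; omega)
      refine ⟨fun j => c j + if j = i then 1 else 0, ?_⟩
      have hsplit : ∑ j, (c j + if j = i then 1 else 0) • f j
          = (∑ j, c j • f j) + ∑ j, (if j = i then 1 else 0 : ℕ) • f j := by
        rw [← Finset.sum_add_distrib]
        congr 1; funext j; rw [add_smul]
      rw [hsplit, ← hc]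
      have h2 : ∑ j, (if j = i then 1 else 0 : ℕ) • f j = f i := by
        rw [Finset.sum_eq_single i]
        · simp
        · intro b _ hbne; simp [hbne]
        · intro h; exact absurd (Finset.mem_univ i) h
      rw [h2]; abel

theorem stmt_14 :
    (∀ i, f i ∈ S₃) ∧
    (∀ v ∈ S₃, ∃ c : Fin 9 → ℕ, v = ∑ i, c i • f i) ∧
    (∀ i : Fin 9, ¬ ∃ a ∈ S₃, ∃ b ∈ S₃, a ≠ 0 ∧ b ≠ 0 ∧ f i = a + b) := by
  refine ⟨lemB, ?_, ?_⟩
  · intro v hv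
    have hs := lemA hv
    obtain ⟨h1, h2, h3, h4, h5, h6⟩ := hs
    exact decomp (v 0 + v 1 + v 2 + v 3).toNat v ⟨h1, h2, h3, h4, h5, h6⟩ (by omega)
  · rintro i ⟨a, ha, b, hb, ha0, hb0, heq⟩
    obtain ⟨a1, a2, a3, a4, a5, a6⟩ := lemA ha
    obtain ⟨b1, b2, b3, b4, b5, b6⟩ := lemA hb
    have hane : ¬(a 0 = 0 ∧ a 1 = 0 ∧ a 2 = 0 ∧ a 3 = 0) := by
      intro ⟨x0, x1, x2, x3⟩
      exact ha0 (funext fun j => by fin_cases j <;> simpa)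
    have hbne : ¬(b 0 = 0 ∧ b 1 = 0 ∧ b 2 = 0 ∧ b 3 = 0) := by
      intro ⟨x0, x1, x2, x3⟩
      exact hb0 (funext fun j => by fin_cases j <;> simpa)
    fin_cases i
    · have e0 : (1 : ℤ) = a 0 + b 0 := congrFun heq 0
      have e1 : (0 : ℤ) = a 1 + b 1 := congrFun heq 1
      have e2 : (0 : ℤ) = a 2 + b 2 := congrFun heq 2
      have e3 : (0 : ℤ) = a 3 + b 3 := congrFun heq 3
      omega
    · have e0 : (0 : ℤ) = a 0 + b 0 := congrFun heq 0
      have e1 : (1 : ℤ) = a 1 + b 1 := congrFun heq 1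
      have e2 : (0 : ℤ) = a 2 + b 2 := congrFun heq 2
      have e3 : (0 : ℤ) = a 3 + b 3 := congrFun heq 3
      omega
    · have e0 : (1 : ℤ) = a 0 + b 0 := congrFun heq 0
      have e1 : (2 : ℤ) = a 1 + b 1 := congrFun heq 1
      have e2 : (3 : ℤ) = a 2 + b 2 := congrFun heq 2
      have e3 : (0 : ℤ) = a 3 + b 3 := congrFun heq 3
      omega
    · have e0 : (0 : ℤ) = a 0 + b 0 := congrFun heq 0
      have e1 : (0 : ℤ) = a 1 + b 1 := congrFun heq 1
      have e2 : (0 : ℤ) = a 2 + b 2 := congrFun heq 2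
      have e3 : (1 : ℤ) = a 3 + b 3 := congrFun heq 3
      omega
    · have e0 : (0 : ℤ) = a 0 + b 0 := congrFun heq 0
      have e1 : (3 : ℤ) = a 1 + b 1 := congrFun heq 1
      have e2 : (3 : ℤ) = a 2 + b 2 := congrFun heq 2
      have e3 : (1 : ℤ) = a 3 + b 3 := congrFun heq 3
      omega
    · have e0 : (0 : ℤ) = a 0 + b 0 := congrFun heq 0
      have e1 : (2 : ℤ) = a 1 + b 1 := congrFun heq 1
      have e2 : (2 : ℤ) = a 2 + b 2 := congrFun heq 2
      have e3 : (1 : ℤ) = a 3 + b 3 := congrFun heq 3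
      omega
    · have e0 : (1 : ℤ) = a 0 + b 0 := congrFun heq 0
      have e1 : (1 : ℤ) = a 1 + b 1 := congrFun heq 1
      have e2 : (1 : ℤ) = a 2 + b 2 := congrFun heq 2
      have e3 : (0 : ℤ) = a 3 + b 3 := congrFun heq 3
      omega
    · have e0 : (1 : ℤ) = a 0 + b 0 := congrFun heq 0
      have e1 : (2 : ℤ) = a 1 + b 1 := congrFun heq 1
      have e2 : (2 : ℤ) = a 2 + b 2 := congrFun heq 2
      have e3 : (0 : ℤ) = a 3 + b 3 := congrFun heq 3
      omega
    · have e0 : (0 : ℤ) = a 0 + b 0 := congrFun heq 0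
      have e1 : (1 : ℤ) = a 1 + b 1 := congrFun heq 1
      have e2 : (1 : ℤ) = a 2 + b 2 := congrFun heq 2
      have e3 : (1 : ℤ) = a 3 + b 3 := congrFun heq 3
      omega
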